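/- If U, Y : ℕ → ℝ are cumulative arrival and departure flows of a server with Y ≤ U pointwise, α is a maximum arrival curve for U (i.e., U(t) - U(s) ≤ α(t-s) for all s ≤ t), and β is a minimum service curve (i.e., Y(t) ≥ min over 0 ≤ s ≤ t of (β(s) + U(t-s))), then the backlog B(t) = U(t) - Y(t) satisfies B(t) ≤ sup over s ≥ 0 of (α(s) - β(s)) for all t. -/
import Mathlib


/-- Network-calculus backlog bound: `B(t) = U(t) - Y(t) ≤ sup_{s ≥ 0} (α(s) - β(s))`. -/
theorem backlog_bound (U Y : ℕ → ℝ) (α β : ℕ → EReal)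
    (hU : Monotone U) (hY : Monotone Y) (hU0 : U 0 = 0) (hY0 : Y 0 = 0)
    (hYU : ∀ t, Y t ≤ U t) (hα0 : 0 ≤ α 0)
    (harr : ∀ s t : ℕ, s ≤ t → ((U t - U s : ℝ) : EReal) ≤ α (t - s))
    (hserv : ∀ t : ℕ, (⨅ s ∈ Finset.Iic t, (β s + ((U (t - s) : ℝ) : EReal))) ≤ (Y t : EReal)) :
    ∀ t : ℕ, ((U t - Y t : ℝ) : EReal) ≤ ⨆ s : ℕ, (α s - β s) := by
  intro t
  -- the infimum is over a nonempty finite set, so it is attained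
  have hex : ∃ s ∈ Finset.Iic t, β s + ((U (t - s) : ℝ) : EReal) ≤ (Y t : EReal) := by
    by_contra h
    push_neg at h
    have hlt : (Y t : EReal) < ⨅ s ∈ Finset.Iic t, (β s + ((U (t - s) : ℝ) : EReal)) := by
      rw [← Finset.inf_eq_iInf]
      exact (Finset.lt_inf_iff (EReal.coe_lt_top _)).2 h
    exact absurd (hserv t) (not_le.2 hlt)
  obtain ⟨s, hs, hle⟩ := hex
  have hst : s ≤ t := Finset.mem_Iic.1 hs
  have harrs : ((U t - U (t - s) : ℝ) : EReal) ≤ α s := by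
    have := harr (t - s) t (Nat.sub_le t s)
    rwa [Nat.sub_sub_self hst] at this
  have hαbot : α s ≠ ⊥ := fun h =>
    (EReal.coe_ne_bot _) (le_bot_iff.1 (h ▸ harrs))
  have key : ((U t - Y t : ℝ) : EReal) ≤ α s - β s := by
    by_cases hbot : β s = ⊥
    · rw [hbot, EReal.sub_bot hαbot]
      exact le_top
    by_cases htop : β s = ⊤
    · exfalso
      rw [htop, EReal.top_add_of_ne_bot (EReal.coe_ne_bot _)] at hle
      exact absurd hle (by simp)
    obtain ⟨b, hβ⟩ : ∃ b : ℝ, β s = (b : EReal) :=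
      ⟨(β s).toReal, (EReal.coe_toReal htop hbot).symm⟩
    rw [hβ] at hle ⊢
    have hb : b + U (t - s) ≤ Y t := by exact_mod_cast hle
    have h1 : U t - Y t ≤ (U t - U (t - s)) - b := by linarith
    calc ((U t - Y t : ℝ) : EReal) ≤ (((U t - U (t - s)) - b : ℝ) : EReal) := by
          exact_mod_cast h1
      _ = ((U t - U (t - s) : ℝ) : EReal) - (b : EReal) := by
          rw [← EReal.coe_sub]
      _ ≤ α s - (b : EReal) := EReal.sub_le_sub harrs le_rfl
  exact key.trans (le_iSup (fun s => α s - β s) s)
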